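/- For n≥2, the homomorphism g: B(A_n) → B(Ã_n) sending σ_i ↦ σ_i for 1≤i≤n is a well-defined group homomorphism and is a section of the surjection f: B(Ã_n) → B(A_n) determined by σ_i ↦ σ_i and a_{n+1} ↦ σ_n^{-1}⋯σ_2^{-1}σ_1σ_2⋯σ_n; that is, f∘g = id on B(A_n), and in particular g is injective and B(Ã_n) is the internal semidirect product of ker f with the image of g. -/

import Mathlib

/-- Relators of the `A`-type braid group `B(A n)`: generator `i : Fin n` stands for `σ_{i+1}`. -/
def braidRelsA (n : ℕ) : Set (FreeGroup (Fin n)) :=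
  { r | (∃ i j : Fin n, (i : ℕ) + 2 ≤ (j : ℕ) ∧
          r = FreeGroup.of i * FreeGroup.of j * (FreeGroup.of j * FreeGroup.of i)⁻¹) ∨
        (∃ i j : Fin n, (j : ℕ) = (i : ℕ) + 1 ∧
          r = FreeGroup.of i * FreeGroup.of j * FreeGroup.of i *
              (FreeGroup.of j * FreeGroup.of i * FreeGroup.of j)⁻¹) }

/-- The `A`-type braid group `B(A_n)` with `n` generators `σ_1, …, σ_n`. -/
abbrev BraidA (n : ℕ) : Type := PresentedGroup (braidRelsA n)

/-- Relators of the affine braid group `B(Ã_n)`: generator `some i` (`i : Fin n`)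
stands for `σ_{i+1}`, and `none` stands for `a_{n+1}`. -/
def braidRelsAff (n : ℕ) : Set (FreeGroup (Option (Fin n))) :=
  { r | (∃ i j : Fin n, (i : ℕ) + 2 ≤ (j : ℕ) ∧
          r = FreeGroup.of (some i) * FreeGroup.of (some j) *
              (FreeGroup.of (some j) * FreeGroup.of (some i))⁻¹) ∨
        (∃ i j : Fin n, (j : ℕ) = (i : ℕ) + 1 ∧
          r = FreeGroup.of (some i) * FreeGroup.of (some j) * FreeGroup.of (some i) *
              (FreeGroup.of (some j) * FreeGroup.of (some i) * FreeGroup.of (some j))⁻¹) ∨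
        (∃ i : Fin n, 1 ≤ (i : ℕ) ∧ (i : ℕ) + 2 ≤ n ∧
          r = FreeGroup.of (some i) * FreeGroup.of none *
              (FreeGroup.of none * FreeGroup.of (some i))⁻¹) ∨
        (∃ i : Fin n, ((i : ℕ) = 0 ∨ (i : ℕ) + 1 = n) ∧
          r = FreeGroup.of (some i) * FreeGroup.of none * FreeGroup.of (some i) *
              (FreeGroup.of none * FreeGroup.of (some i) * FreeGroup.of none)⁻¹) }

/-- The affine (`Ã`-type) braid group `B(Ã_n)`, with generators `σ_1, …, σ_n` and `a_{n+1}`. -/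
abbrev BraidAff (n : ℕ) : Type := PresentedGroup (braidRelsAff n)

/-- `b = σ_n⁻¹ σ_{n-1}⁻¹ ⋯ σ_2⁻¹ σ_1 σ_2 ⋯ σ_{n-1} σ_n` in `B(A_n)`. -/
noncomputable def bA (n : ℕ) (h : 0 < n) : BraidA n :=
  ((((List.finRange n).drop 1).map fun i => (PresentedGroup.of i : BraidA n)).prod)⁻¹ *
    PresentedGroup.of (⟨0, h⟩ : Fin n) *
    (((List.finRange n).drop 1).map fun i => (PresentedGroup.of i : BraidA n)).prod

namespace Braid9

/-- A relator maps to `1` in the presented group. -/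
lemma rel_one {α : Type*} (rels : Set (FreeGroup α)) {r : FreeGroup α} (h : r ∈ rels) :
    PresentedGroup.mk rels r = 1 :=
  (QuotientGroup.eq_one_iff r).2 (Subgroup.subset_normalClosure h)

lemma of_comm {α : Type*} {rels : Set (FreeGroup α)} {i j : α}
    (h : FreeGroup.of i * FreeGroup.of j * (FreeGroup.of j * FreeGroup.of i)⁻¹ ∈ rels) :
    (PresentedGroup.of i : PresentedGroup rels) * PresentedGroup.of j =
      PresentedGroup.of j * PresentedGroup.of i := by
  have h1 := rel_one rels h
  rw [map_mul, map_mul, map_inv, map_mul, mul_inv_eq_one] at h1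
  exact h1

lemma of_braid {α : Type*} {rels : Set (FreeGroup α)} {i j : α}
    (h : FreeGroup.of i * FreeGroup.of j * FreeGroup.of i *
        (FreeGroup.of j * FreeGroup.of i * FreeGroup.of j)⁻¹ ∈ rels) :
    (PresentedGroup.of i : PresentedGroup rels) * PresentedGroup.of j * PresentedGroup.of i =
      PresentedGroup.of j * PresentedGroup.of i * PresentedGroup.of j := by
  have h1 := rel_one rels h
  rw [map_mul, map_mul, map_mul, map_inv, map_mul, map_mul, mul_inv_eq_one] at h1
  exact h1

/-- `gg n k` is `σ_{k+1}` if `k < n`, and `1` otherwise. -/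
noncomputable def gg (n : ℕ) (k : ℕ) : BraidA n :=
  if h : k < n then PresentedGroup.of ⟨k, h⟩ else 1

lemma gg_of {n : ℕ} (i : Fin n) : gg n i = PresentedGroup.of i := by
  simp [gg]

lemma gcomm {n : ℕ} {a b : ℕ} (h : a + 2 ≤ b) : gg n a * gg n b = gg n b * gg n a := by
  by_cases hb : b < n
  · have ha : a < n := by omega
    rw [gg, dif_pos ha, gg, dif_pos hb]
    exact of_comm (Or.inl ⟨⟨a, ha⟩, ⟨b, hb⟩, h, rfl⟩)
  · have hb1 : gg n b = 1 := dif_neg hb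
    rw [hb1, mul_one, one_mul]

lemma gbraid {n : ℕ} {a : ℕ} (h : a + 2 ≤ n) :
    gg n a * gg n (a+1) * gg n a = gg n (a+1) * gg n a * gg n (a+1) := by
  have ha : a < n := by omega
  have ha1 : a + 1 < n := by omega
  rw [gg, dif_pos ha, gg, dif_pos ha1]
  exact of_braid (Or.inr ⟨⟨a, ha⟩, ⟨a+1, ha1⟩, rfl, rfl⟩)

/-- `Wp n a l = g a * g (a+1) * ⋯ * g (a+l-1)`. -/
noncomputable def Wp (n : ℕ) : ℕ → ℕ → BraidA n
  | _, 0 => 1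
  | a, l+1 => gg n a * Wp n (a+1) l

lemma Wp_zero (n a : ℕ) : Wp n a 0 = 1 := rfl

lemma Wp_succ (n a l : ℕ) : Wp n a (l+1) = gg n a * Wp n (a+1) l := rfl

lemma Wp_succ_right (n : ℕ) : ∀ l a, Wp n a (l+1) = Wp n a l * gg n (a+l) := by
  intro l
  induction l with
  | zero => intro a; rw [Wp_succ, Wp_zero, Wp_zero, mul_one, one_mul, Nat.add_zero]
  | succ l ih =>
    intro a
    rw [Wp_succ, ih (a+1), Wp_succ n a l, mul_assoc,
      show a + 1 + l = a + (l + 1) from by omega]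

lemma comm_left (n : ℕ) : ∀ l a c, c + 2 ≤ a → Commute (gg n c) (Wp n a l) := by
  intro l
  induction l with
  | zero => intro a c _; rw [Wp_zero]; exact Commute.one_right _
  | succ l ih =>
    intro a c h
    rw [Wp_succ]
    exact Commute.mul_right (gcomm h) (ih (a+1) c (by omega))

lemma comm_right (n : ℕ) : ∀ l a c, a + l + 1 ≤ c → Commute (gg n c) (Wp n a l) := by
  intro l
  induction l with
  | zero => intro a c _; rw [Wp_zero]; exact Commute.one_right _
  | succ l ih =>
    intro a c h
    rw [Wp_succ]
    have h1 : gg n a * gg n c = gg n c * gg n a := gcomm (show a + 2 ≤ c by omega)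
    exact Commute.mul_right ((Commute.symm h1) : Commute (gg n c) (gg n a))
      (ih (a+1) c (by omega))

lemma shift (n : ℕ) : ∀ l a c, a ≤ c → c + 2 ≤ a + l → a + l ≤ n →
    gg n (c+1) * Wp n a l = Wp n a l * gg n c := by
  intro l
  induction l with
  | zero => intro a c h1 h2 _; omega
  | succ l ih =>
    intro a c h1 h2 h3
    rcases eq_or_lt_of_le h1 with rfl | hlt
    · -- c = a
      obtain ⟨l', rfl⟩ : ∃ l', l = l' + 1 := ⟨l - 1, by omega⟩
      rw [Wp_succ, Wp_succ]
      have hb : gg n a * gg n (a+1) * gg n a = gg n (a+1) * gg n a * gg n (a+1) :=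
        gbraid (by omega)
      have hc : Commute (gg n a) (Wp n (a+1+1) l') := comm_left n l' (a+1+1) a (by omega)
      calc gg n (a+1) * (gg n a * (gg n (a+1) * Wp n (a+1+1) l'))
          = (gg n (a+1) * gg n a * gg n (a+1)) * Wp n (a+1+1) l' := by group
        _ = (gg n a * gg n (a+1) * gg n a) * Wp n (a+1+1) l' := by rw [← hb]
        _ = gg n a * gg n (a+1) * (gg n a * Wp n (a+1+1) l') := by group
        _ = gg n a * gg n (a+1) * (Wp n (a+1+1) l' * gg n a) := by rw [hc.eq]
        _ = gg n a * (gg n (a+1) * Wp n (a+1+1) l') * gg n a := by group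
    · -- a < c
      rw [Wp_succ]
      have hcm : gg n a * gg n (c+1) = gg n (c+1) * gg n a :=
        gcomm (show a + 2 ≤ c + 1 by omega)
      calc gg n (c+1) * (gg n a * Wp n (a+1) l)
          = (gg n (c+1) * gg n a) * Wp n (a+1) l := by group
        _ = (gg n a * gg n (c+1)) * Wp n (a+1) l := by rw [hcm]
        _ = gg n a * (gg n (c+1) * Wp n (a+1) l) := by group
        _ = gg n a * (Wp n (a+1) l * gg n c) := by
              rw [ih (a+1) c (by omega) (by omega) (by omega)]
        _ = gg n a * Wp n (a+1) l * gg n c := by group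

/-- Cycling lemma: `(g 0 ⋯ g (k-1)) · g k = c_k · (g 0 ⋯ g (k-1))` where
`c_k = (g 1 ⋯ g k)⁻¹ g 0 (g 1 ⋯ g k)`. -/
lemma Fc (n : ℕ) : ∀ k, 1 ≤ k → k + 1 ≤ n →
    Wp n 0 k * gg n k = (Wp n 1 k)⁻¹ * gg n 0 * Wp n 1 k * Wp n 0 k := by
  intro k
  induction k with
  | zero => omega
  | succ k ih =>
    intro _ hk1
    rcases Nat.eq_zero_or_pos k with rfl | hkpos
    · -- base case: k+1 = 1
      have hb : gg n 0 * gg n 1 * gg n 0 = gg n 1 * gg n 0 * gg n 1 := gbraid (by omega)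
      have e1 : Wp n 0 1 = gg n 0 := by simp [Wp]
      have e2 : Wp n 1 1 = gg n 1 := by simp [Wp]
      rw [e1, e2]
      calc gg n 0 * gg n 1
          = (gg n 1)⁻¹ * (gg n 1 * gg n 0 * gg n 1) := by group
        _ = (gg n 1)⁻¹ * (gg n 0 * gg n 1 * gg n 0) := by rw [← hb]
        _ = (gg n 1)⁻¹ * gg n 0 * gg n 1 * gg n 0 := by group
    · -- inductive step
      have ih' := ih hkpos (by omega)
      have hA : Wp n 0 (k+1) = Wp n 0 k * gg n k := by
        have e := Wp_succ_right n k 0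
        rwa [show 0 + k = k from by omega] at e
      have hB : Wp n 1 (k+1) = Wp n 1 k * gg n (k+1) := by
        have e := Wp_succ_right n k 1
        rwa [show 1 + k = k + 1 from by omega] at e
      have hcom : Commute (gg n (k+1)) (Wp n 0 k) := comm_right n k 0 (k+1) (by omega)
      have hbr : gg n k * gg n (k+1) * gg n k = gg n (k+1) * gg n k * gg n (k+1) :=
        gbraid (by omega)
      rw [hA, hB]
      symm
      calc (Wp n 1 k * gg n (k+1))⁻¹ * gg n 0 * (Wp n 1 k * gg n (k+1)) * (Wp n 0 k * gg n k)
          = (gg n (k+1))⁻¹ * ((Wp n 1 k)⁻¹ * gg n 0 * Wp n 1 k) * (gg n (k+1) * Wp n 0 k) *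
              gg n k := by group
        _ = (gg n (k+1))⁻¹ * ((Wp n 1 k)⁻¹ * gg n 0 * Wp n 1 k) * (Wp n 0 k * gg n (k+1)) *
              gg n k := by rw [hcom.eq]
        _ = (gg n (k+1))⁻¹ * ((Wp n 1 k)⁻¹ * gg n 0 * Wp n 1 k * Wp n 0 k) *
              (gg n (k+1) * gg n k) := by group
        _ = (gg n (k+1))⁻¹ * (Wp n 0 k * gg n k) * (gg n (k+1) * gg n k) := by rw [← ih']
        _ = ((gg n (k+1))⁻¹ * Wp n 0 k) * (gg n k * gg n (k+1) * gg n k) := by group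
        _ = (Wp n 0 k * (gg n (k+1))⁻¹) * (gg n k * gg n (k+1) * gg n k) := by
              rw [hcom.inv_left.eq]
        _ = (Wp n 0 k * (gg n (k+1))⁻¹) * (gg n (k+1) * gg n k * gg n (k+1)) := by rw [hbr]
        _ = Wp n 0 k * gg n k * gg n (k+1) := by group

/-- The conjugating word `Q = σ_2 ⋯ σ_n`. -/
noncomputable def Qn (n : ℕ) : BraidA n := Wp n 1 (n-1)

/-- `b = Q⁻¹ σ_1 Q`. -/
noncomputable def bb (n : ℕ) : BraidA n := (Qn n)⁻¹ * gg n 0 * Qn n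

lemma rel_I {n : ℕ} (hn : 2 ≤ n) {c : ℕ} (hc1 : 1 ≤ c) (hc2 : c + 2 ≤ n) :
    gg n c * bb n = bb n * gg n c := by
  have hs : gg n (c+1) * Qn n = Qn n * gg n c :=
    shift n (n-1) 1 c hc1 (by omega) (by omega)
  have hc0 : gg n 0 * gg n (c+1) = gg n (c+1) * gg n 0 := gcomm (by omega)
  apply mul_left_cancel (a := Qn n)
  rw [bb]
  calc Qn n * (gg n c * ((Qn n)⁻¹ * gg n 0 * Qn n))
      = (Qn n * gg n c) * ((Qn n)⁻¹ * gg n 0 * Qn n) := by group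
    _ = (gg n (c+1) * Qn n) * ((Qn n)⁻¹ * gg n 0 * Qn n) := by rw [hs]
    _ = gg n (c+1) * gg n 0 * Qn n := by group
    _ = gg n 0 * gg n (c+1) * Qn n := by rw [← hc0]
    _ = gg n 0 * (gg n (c+1) * Qn n) := by group
    _ = gg n 0 * (Qn n * gg n c) := by rw [hs]
    _ = Qn n * ((Qn n)⁻¹ * gg n 0 * Qn n * gg n c) := by group

/-- Generic lemma: if `x y x = y x y` then `x` and `y⁻¹ x y` satisfy the braid relation. -/
lemma braid_conj {G : Type*} [Group G] (x y : G) (h : x * y * x = y * x * y) :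
    x * (y⁻¹ * x * y) * x = (y⁻¹ * x * y) * x * (y⁻¹ * x * y) := by
  have h2 : y * x * y⁻¹ = x⁻¹ * y * x := by
    calc y * x * y⁻¹ = x⁻¹ * (x * y * x) * y⁻¹ := by group
      _ = x⁻¹ * (y * x * y) * y⁻¹ := by rw [h]
      _ = x⁻¹ * y * x := by group
  calc x * (y⁻¹ * x * y) * x
      = x * y⁻¹ * (x * y * x) := by group
    _ = x * y⁻¹ * (y * x * y) := by rw [h]
    _ = x * x * y := by group
    _ = y⁻¹ * x * (x⁻¹ * y * x) * x * y := by group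
    _ = y⁻¹ * x * (y * x * y⁻¹) * x * y := by rw [← h2]
    _ = (y⁻¹ * x * y) * x * (y⁻¹ * x * y) := by group

lemma rel_II {n : ℕ} (hn : 2 ≤ n) :
    gg n 0 * bb n * gg n 0 = bb n * gg n 0 * bb n := by
  have hQ : Qn n = gg n 1 * Wp n 2 (n-2) := by
    have e := Wp_succ n 1 (n-2)
    rw [show n - 2 + 1 = n - 1 from by omega] at e
    rw [Qn, e]
  set T := Wp n 2 (n-2) with hT
  have hcT : Commute (gg n 0) T := comm_left n (n-2) 2 0 (by omega)
  have hu := braid_conj (gg n 0) (gg n 1) (gbraid (by omega))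
  have hbbeq : bb n = T⁻¹ * ((gg n 1)⁻¹ * gg n 0 * gg n 1) * T := by
    rw [bb, hQ]; group
  rw [hbbeq]
  calc gg n 0 * (T⁻¹ * ((gg n 1)⁻¹ * gg n 0 * gg n 1) * T) * gg n 0
      = (gg n 0 * T⁻¹) * ((gg n 1)⁻¹ * gg n 0 * gg n 1) * (T * gg n 0) := by group
    _ = (T⁻¹ * gg n 0) * ((gg n 1)⁻¹ * gg n 0 * gg n 1) * (T * gg n 0) := by
          rw [hcT.inv_right.eq]
    _ = (T⁻¹ * gg n 0) * ((gg n 1)⁻¹ * gg n 0 * gg n 1) * (gg n 0 * T) := by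
          rw [← hcT.eq]
    _ = T⁻¹ * (gg n 0 * ((gg n 1)⁻¹ * gg n 0 * gg n 1) * gg n 0) * T := by group
    _ = T⁻¹ * (((gg n 1)⁻¹ * gg n 0 * gg n 1) * gg n 0 *
          ((gg n 1)⁻¹ * gg n 0 * gg n 1)) * T := by rw [hu]
    _ = (T⁻¹ * ((gg n 1)⁻¹ * gg n 0 * gg n 1)) * (gg n 0 * T) *
          (T⁻¹ * ((gg n 1)⁻¹ * gg n 0 * gg n 1) * T) := by group
    _ = (T⁻¹ * ((gg n 1)⁻¹ * gg n 0 * gg n 1)) * (T * gg n 0) *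
          (T⁻¹ * ((gg n 1)⁻¹ * gg n 0 * gg n 1) * T) := by rw [hcT.eq]
    _ = T⁻¹ * ((gg n 1)⁻¹ * gg n 0 * gg n 1) * T * gg n 0 *
          (T⁻¹ * ((gg n 1)⁻¹ * gg n 0 * gg n 1) * T) := by group

lemma rel_III {n : ℕ} (hn : 2 ≤ n) :
    gg n (n-1) * bb n * gg n (n-1) = bb n * gg n (n-1) * bb n := by
  set δ := Wp n 0 n with hδ
  have hδ1 : δ = gg n 0 * Qn n := by
    have e := Wp_succ n 0 (n-1)
    rw [show n - 1 + 1 = n from by omega] at e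
    rw [hδ, Qn, e]
  have hF : Wp n 0 (n-1) * gg n (n-1) =
      (Wp n 1 (n-1))⁻¹ * gg n 0 * Wp n 1 (n-1) * Wp n 0 (n-1) :=
    Fc n (n-1) (by omega) (by omega)
  have hF' : Wp n 0 (n-1) * gg n (n-1) = bb n * Wp n 0 (n-1) := by
    rw [hF, bb, Qn]
  have hδ2 : δ = Wp n 0 (n-1) * gg n (n-1) := by
    have e := Wp_succ_right n (n-1) 0
    rw [show n - 1 + 1 = n from by omega, show 0 + (n-1) = n - 1 from by omega] at e
    rw [hδ, e]
  have hδ3 : δ = bb n * Wp n 0 (n-1) := by rw [hδ2, hF']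
  have h1 : δ * gg n (n-1) = bb n * δ := by
    calc δ * gg n (n-1)
        = bb n * (Wp n 0 (n-1) * gg n (n-1)) := by rw [hδ3]; group
      _ = bb n * (bb n * Wp n 0 (n-1)) := by rw [hF']
      _ = bb n * δ := by rw [← hδ3]
  have h2 : δ * bb n = gg n 0 * δ := by
    rw [hδ1, bb]
    group
  apply mul_left_cancel (a := δ)
  calc δ * (gg n (n-1) * bb n * gg n (n-1))
      = (δ * gg n (n-1)) * bb n * gg n (n-1) := by group
    _ = (bb n * δ) * bb n * gg n (n-1) := by rw [h1]
    _ = bb n * (δ * bb n) * gg n (n-1) := by group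
    _ = bb n * (gg n 0 * δ) * gg n (n-1) := by rw [h2]
    _ = bb n * gg n 0 * (δ * gg n (n-1)) := by group
    _ = bb n * gg n 0 * (bb n * δ) := by rw [h1]
    _ = (bb n * gg n 0 * bb n) * δ := by group
    _ = (gg n 0 * bb n * gg n 0) * δ := by rw [← rel_II hn]
    _ = gg n 0 * (bb n * gg n 0 * δ) := by group
    _ = gg n 0 * (bb n * (gg n 0 * δ)) := by group
    _ = gg n 0 * (bb n * (δ * bb n)) := by rw [← h2]
    _ = gg n 0 * (bb n * δ) * bb n := by group
    _ = gg n 0 * (δ * gg n (n-1)) * bb n := by rw [← h1]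
    _ = (gg n 0 * δ) * gg n (n-1) * bb n := by group
    _ = (δ * bb n) * gg n (n-1) * bb n := by rw [← h2]
    _ = δ * (bb n * gg n (n-1) * bb n) := by group

lemma range'_prod_eq (n : ℕ) : ∀ l a, ((List.range' a l).map (gg n)).prod = Wp n a l := by
  intro l
  induction l with
  | zero => intro a; rfl
  | succ l ih =>
    intro a
    rw [show List.range' a (l+1) = a :: List.range' (a+1) l from rfl, List.map_cons,
      List.prod_cons, ih (a+1), Wp_succ]

lemma Q_eq (n : ℕ) :
    (((List.finRange n).drop 1).map fun i => (PresentedGroup.of i : BraidA n)).prod = Qn n := by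
  have h1 : (((List.finRange n).drop 1).map fun i => (PresentedGroup.of i : BraidA n))
      = ((List.finRange n).drop 1).map (gg n ∘ Fin.val) := by
    refine List.map_congr_left ?_
    intro i _
    exact (gg_of i).symm
  have h2 : List.drop 1 (List.range' 0 n) = List.range' 1 (n-1) := by
    match n with
    | 0 => rfl
    | _+1 => rfl
  rw [h1, ← List.map_map, List.map_drop, List.map_coe_finRange_eq_range, List.range_eq_range', h2,
    range'_prod_eq, Qn]

lemma bA_eq (n : ℕ) (h : 0 < n) : bA n h = bb n := by
  rw [bA, bb, Q_eq]
  congr 1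
  rw [gg, dif_pos h]

/-- The map defining `f : B(Ã_n) → B(A_n)`. -/
noncomputable def Fmap (n : ℕ) : Option (Fin n) → BraidA n :=
  fun o => o.elim (bb n) fun i => PresentedGroup.of i

lemma Frels {n : ℕ} (hn : 2 ≤ n) :
    ∀ r ∈ braidRelsAff n, FreeGroup.lift (Fmap n) r = 1 := by
  intro r hr
  rcases hr with ⟨i, j, hij, rfl⟩ | ⟨i, j, hij, rfl⟩ | ⟨i, h1, h2, rfl⟩ | ⟨i, hi, rfl⟩
  · rw [map_mul, map_mul, map_inv, map_mul, mul_inv_eq_one]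
    simp only [FreeGroup.lift_apply_of, Fmap, Option.elim]
    rw [← gg_of i, ← gg_of j]
    exact gcomm hij
  · rw [map_mul, map_mul, map_mul, map_inv, map_mul, map_mul, mul_inv_eq_one]
    simp only [FreeGroup.lift_apply_of, Fmap, Option.elim]
    rw [← gg_of i, ← gg_of j, show (j : ℕ) = (i : ℕ) + 1 from hij]
    exact gbraid (by have := j.isLt; omega)
  · rw [map_mul, map_mul, map_inv, map_mul, mul_inv_eq_one]
    simp only [FreeGroup.lift_apply_of, Fmap, Option.elim]
    rw [← gg_of i]
    exact rel_I hn h1 h2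
  · rw [map_mul, map_mul, map_mul, map_inv, map_mul, map_mul, mul_inv_eq_one]
    simp only [FreeGroup.lift_apply_of, Fmap, Option.elim]
    rw [← gg_of i]
    rcases hi with hi | hi
    · rw [show (i : ℕ) = 0 from hi]
      exact rel_II hn
    · rw [show (i : ℕ) = n - 1 from by omega]
      exact rel_III hn
  
/-- The map defining `g : B(A_n) → B(Ã_n)`. -/
noncomputable def Gmap (n : ℕ) : Fin n → BraidAff n :=
  fun i => PresentedGroup.of (some i)

lemma Grels (n : ℕ) : ∀ r ∈ braidRelsA n, FreeGroup.lift (Gmap n) r = 1 := by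
  intro r hr
  rcases hr with ⟨i, j, hij, rfl⟩ | ⟨i, j, hij, rfl⟩
  · rw [map_mul, map_mul, map_inv, map_mul, mul_inv_eq_one]
    simp only [FreeGroup.lift_apply_of, Gmap]
    exact of_comm (Or.inl ⟨i, j, hij, rfl⟩)
  · rw [map_mul, map_mul, map_mul, map_inv, map_mul, map_mul, mul_inv_eq_one]
    simp only [FreeGroup.lift_apply_of, Gmap]
    exact of_braid (Or.inr (Or.inl ⟨i, j, hij, rfl⟩))

end Braid9

theorem stmt_9 (n : ℕ) (hn : 2 ≤ n) :
    ∃ (f : BraidAff n →* BraidA n) (g : BraidA n →* BraidAff n),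
      (∀ i : Fin n, f (PresentedGroup.of (some i)) = PresentedGroup.of i) ∧
      f (PresentedGroup.of none) = bA n (by omega) ∧
      Function.Surjective f ∧
      (∀ i : Fin n, g (PresentedGroup.of i) = PresentedGroup.of (some i)) ∧
      f.comp g = MonoidHom.id (BraidA n) ∧
      Function.Injective g ∧
      f.ker ⊓ g.range = ⊥ ∧
      f.ker ⊔ g.range = ⊤ := by
  classical
  set f : BraidAff n →* BraidA n := PresentedGroup.toGroup (Braid9.Frels hn) with hf
  set g : BraidA n →* BraidAff n := PresentedGroup.toGroup (Braid9.Grels n) with hg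
  have hfi : ∀ i : Fin n, f (PresentedGroup.of (some i)) = PresentedGroup.of i := by
    intro i
    rw [hf, PresentedGroup.toGroup.of]
    rfl
  have hfnone : f (PresentedGroup.of none) = bA n (by omega) := by
    rw [hf, PresentedGroup.toGroup.of]
    exact (Braid9.bA_eq n (by omega)).symm
  have hgi : ∀ i : Fin n, g (PresentedGroup.of i) = PresentedGroup.of (some i) := by
    intro i
    rw [hg, PresentedGroup.toGroup.of]
    rfl
  have hcomp : f.comp g = MonoidHom.id (BraidA n) := by
    ext i
    rw [MonoidHom.comp_apply, hgi, hfi, MonoidHom.id_apply]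
  have hleft : ∀ x, f (g x) = x := fun x => DFunLike.congr_fun hcomp x
  refine ⟨f, g, hfi, hfnone, fun x => ⟨g x, hleft x⟩, hgi, hcomp, ?_, ?_, ?_⟩
  · intro a b hab
    have := congrArg f hab
    rwa [hleft, hleft] at this
  · rw [eq_bot_iff]
    intro x hx
    rw [Subgroup.mem_inf] at hx
    obtain ⟨hk, hr⟩ := hx
    obtain ⟨y, rfl⟩ := MonoidHom.mem_range.mp hr
    have : y = 1 := by
      have h1 : f (g y) = 1 := hk
      rwa [hleft] at h1
    rw [Subgroup.mem_bot, this, map_one]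
  · rw [eq_top_iff]
    intro x _
    have hker : x * (g (f x))⁻¹ ∈ f.ker := by
      rw [MonoidHom.mem_ker, map_mul, map_inv, hleft, mul_inv_cancel]
    have hrange : g (f x) ∈ g.range := ⟨f x, rfl⟩
    have : x = (x * (g (f x))⁻¹) * g (f x) := by group
    rw [this]
    exact Subgroup.mul_mem _ (Subgroup.mem_sup_left hker) (Subgroup.mem_sup_right hrange)
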